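/- Let F_1, F_2, ..., F_k (k ≥ 1) be graphs on a common finite vertex set V of size n, each with minimum degree at least δ, where δ ≥ 1, and let G be the combined graph with average degree d̄. Then the simultaneous domination number of F_1, ..., F_k is at most (⌈d̄⌉ / (⌈d̄⌉ + δ)) · n. -/

import Mathlib

open Finset

namespace SDAux

variable {V : Type*} [Fintype V] [DecidableEq V] (G : SimpleGraph V) (δ : ℕ)

open Classical in
/-- number of `G`-neighbors of `v` inside `A` -/
noncomputable def cnt (A : Finset V) (v : V) : ℕ :=
  (A.filter (fun u => G.Adj v u)).card

open Classical in
/-- sum of internal degrees (twice the number of internal edges) -/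
noncomputable def E2 (S : Finset V) : ℕ := ∑ v ∈ S, cnt G S v

lemma cnt_mono {A B : Finset V} (h : A ⊆ B) (v : V) : cnt G A v ≤ cnt G B v := by
  classical
  unfold cnt
  apply card_le_card
  intro u hu
  simp only [mem_filter] at hu ⊢
  exact ⟨h hu.1, hu.2⟩

lemma cnt_split {A W : Finset V} (h : A ⊆ W) (v : V) :
    cnt G W v = cnt G A v + cnt G (W \ A) v := by
  classical
  unfold cnt
  rw [← card_union_of_disjoint (disjoint_filter_filter disjoint_sdiff)]
  congr 1
  rw [← filter_union, union_sdiff_of_subset h]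

lemma cnt_erase_self (A : Finset V) (v : V) : cnt G (A.erase v) v = cnt G A v := by
  classical
  unfold cnt
  congr 1
  ext u
  simp only [mem_filter, mem_erase]
  constructor
  · rintro ⟨⟨_, hu⟩, ha⟩; exact ⟨hu, ha⟩
  · rintro ⟨hu, ha⟩
    refine ⟨⟨?_, hu⟩, ha⟩
    intro heq
    exact G.loopless.irrefl v (heq ▸ ha)

lemma cnt_comm_sum (A B : Finset V) :
    ∑ b ∈ B, cnt G A b = ∑ a ∈ A, cnt G B a := by
  classical
  unfold cnt
  simp only [card_filter]
  rw [Finset.sum_comm]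
  apply Finset.sum_congr rfl
  intro a _
  apply Finset.sum_congr rfl
  intro b _
  have h : G.Adj b a ↔ G.Adj a b := G.adj_comm b a
  simp only [h]

lemma E2_insert {A : Finset V} {b : V} (hb : b ∉ A) :
    E2 G (insert b A) = E2 G A + 2 * cnt G A b := by
  classical
  unfold E2
  rw [Finset.sum_insert hb]
  have h1 : cnt G (insert b A) b = cnt G A b := by
    unfold cnt
    rw [filter_insert]
    split_ifs with h
    · exact absurd h (G.loopless.irrefl b)
    · rfl
  have h2 : ∀ v ∈ A, cnt G (insert b A) v = cnt G A v + (if G.Adj v b then 1 else 0) := by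
    intro v _
    unfold cnt
    rw [filter_insert]
    split_ifs with h
    · rw [card_insert_of_notMem (fun hmem => hb (Finset.mem_of_mem_filter b hmem))]
    · rw [add_zero]
  rw [Finset.sum_congr rfl h2, Finset.sum_add_distrib]
  have h3 : ∑ v ∈ A, (if G.Adj v b then 1 else 0) = cnt G A b := by
    unfold cnt
    rw [card_filter]
    apply Finset.sum_congr rfl
    intro v _
    have h : G.Adj b v ↔ G.Adj v b := G.adj_comm b v
    simp only [h]
  rw [h1, h3]
  ring

lemma E2_erase {A : Finset V} {v : V} (hv : v ∈ A) :
    E2 G A = E2 G (A.erase v) + 2 * cnt G A v := by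
  classical
  have h := E2_insert G (b := v) (A := A.erase v) (notMem_erase v A)
  rw [insert_erase hv] at h
  rw [h, cnt_erase_self]



/-- potential, in ℤ -/
noncomputable def pot (S : Finset V) : ℤ := 2 * δ * S.card - E2 G S

lemma exists_pick (W : Finset V) :
    ∃ A : Finset V, A ⊆ W ∧ (∀ v ∈ A, cnt G A v < δ) ∧
      (∀ b ∈ W, b ∉ A → δ ≤ cnt G A b) := by
  classical
  -- maximizers of pot within powerset W
  obtain ⟨S₀, hS₀, hS₀max⟩ := Finset.exists_max_image W.powerset (pot G δ)
    ⟨∅, Finset.empty_mem_powerset W⟩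
  set M : Finset (Finset V) :=
    W.powerset.filter (fun S => ∀ T ∈ W.powerset, pot G δ T ≤ pot G δ S) with hM
  have hS₀M : S₀ ∈ M := by
    rw [hM, mem_filter]
    exact ⟨hS₀, hS₀max⟩
  obtain ⟨A, hAM, hAmin⟩ := Finset.exists_min_image M Finset.card ⟨S₀, hS₀M⟩
  rw [hM, mem_filter] at hAM
  obtain ⟨hApow, hAmax⟩ := hAM
  have hAW : A ⊆ W := Finset.mem_powerset.mp hApow
  refine ⟨A, hAW, ?_, ?_⟩
  · intro v hv
    by_contra hcon
    push_neg at hcon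
    -- erase v : potential does not decrease, smaller card
    have herase : pot G δ (A.erase v) = pot G δ A - 2 * δ + 2 * cnt G A v := by
      unfold pot
      rw [Finset.card_erase_of_mem hv]
      have hE := E2_erase G hv
      have hc1 : (1 : ℕ) ≤ A.card := Finset.card_pos.mpr ⟨v, hv⟩
      push_cast [hE, Nat.cast_sub hc1]
      ring
    have hpow : A.erase v ∈ W.powerset :=
      Finset.mem_powerset.mpr ((Finset.erase_subset v A).trans hAW)
    have hle : pot G δ A ≤ pot G δ (A.erase v) := by
      rw [herase]
      have : (2 : ℤ) * δ ≤ 2 * cnt G A v := by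
        have := hcon
        push_cast
        omega
      omega
    have hmem : A.erase v ∈ M := by
      rw [hM, mem_filter]
      exact ⟨hpow, fun T hT => (hAmax T hT).trans hle⟩
    have := hAmin _ hmem
    rw [Finset.card_erase_of_mem hv] at this
    have hc1 : (1 : ℕ) ≤ A.card := Finset.card_pos.mpr ⟨v, hv⟩
    omega
  · intro b hbW hbA
    have hpow : insert b A ∈ W.powerset :=
      Finset.mem_powerset.mpr (Finset.insert_subset hbW hAW)
    have h := hAmax _ hpow
    unfold pot at h
    rw [Finset.card_insert_of_notMem hbA, E2_insert G hbA] at h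
    push_cast at h
    have h' : (δ : ℤ) ≤ (cnt G A b : ℤ) := by nlinarith [h]
    exact_mod_cast h'

/-- Counting: removing the picked set decreases E2 by at least `2δ|removed complement|`. -/
lemma E2_step {A W : Finset V} (hAW : A ⊆ W)
    (hout : ∀ b ∈ W, b ∉ A → δ ≤ cnt G A b) :
    E2 G (W \ A) + 2 * δ * (W \ A).card ≤ E2 G W := by
  classical
  set B := W \ A with hB
  have hBW : B ⊆ W := Finset.sdiff_subset
  have hsplit : ∀ v, v ∈ W → cnt G W v = cnt G A v + cnt G B v :=
    fun v _ => cnt_split G hAW v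
  have hWsum : E2 G W = ∑ v ∈ A, cnt G W v + ∑ v ∈ B, cnt G W v := by
    unfold E2
    rw [← Finset.sum_sdiff hAW, ← hB]
    ring
  have hBpart : ∑ v ∈ B, cnt G W v = (∑ v ∈ B, cnt G A v) + E2 G B := by
    unfold E2
    rw [← Finset.sum_add_distrib]
    apply Finset.sum_congr rfl
    intro v hv
    exact hsplit v (hBW hv)
  have hdc : ∑ v ∈ A, cnt G B v = ∑ b ∈ B, cnt G A b := (cnt_comm_sum G A B).symm
  have hBdeg : ∀ b ∈ B, δ ≤ cnt G A b := by
    intro b hb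
    rw [hB, Finset.mem_sdiff] at hb
    exact hout b hb.1 hb.2
  have h1 : δ * B.card ≤ ∑ b ∈ B, cnt G A b := by
    calc δ * B.card = ∑ _b ∈ B, δ := by rw [Finset.sum_const, smul_eq_mul, mul_comm]
    _ ≤ ∑ b ∈ B, cnt G A b := Finset.sum_le_sum hBdeg
  have h2 : ∑ v ∈ A, cnt G B v ≤ ∑ v ∈ A, cnt G W v := by
    apply Finset.sum_le_sum
    intro a _
    exact cnt_mono G hBW a
  have hfix : 2 * δ * B.card = 2 * (δ * B.card) := by ring
  omega


noncomputable def pick (W : Finset V) : Finset V := (exists_pick G δ W).choose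

lemma pick_subset (W : Finset V) : pick G δ W ⊆ W := (exists_pick G δ W).choose_spec.1
lemma pick_valid (W : Finset V) : ∀ v ∈ pick G δ W, cnt G (pick G δ W) v < δ :=
  (exists_pick G δ W).choose_spec.2.1
lemma pick_out (W : Finset V) : ∀ b ∈ W, b ∉ pick G δ W → δ ≤ cnt G (pick G δ W) b :=
  (exists_pick G δ W).choose_spec.2.2

noncomputable def Wseq : ℕ → Finset V
  | 0 => Finset.univ
  | j + 1 => Wseq j \ pick G δ (Wseq j)

lemma chain_E2 : ∀ J : ℕ,
    2 * δ * (∑ i ∈ Finset.range J, (Wseq G δ (i + 1)).card) + E2 G (Wseq G δ J)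
      ≤ E2 G (Wseq G δ 0) := by
  intro J
  induction J with
  | zero => simp
  | succ J ih =>
    rw [Finset.sum_range_succ]
    have hstep : E2 G (Wseq G δ (J + 1)) + 2 * δ * (Wseq G δ (J + 1)).card
        ≤ E2 G (Wseq G δ J) := by
      have h := E2_step G δ (pick_subset G δ (Wseq G δ J)) (pick_out G δ (Wseq G δ J))
      exact h
    have hexp : 2 * δ * ((∑ i ∈ Finset.range J, (Wseq G δ (i+1)).card)
        + (Wseq G δ (J+1)).card)
        = 2 * δ * (∑ i ∈ Finset.range J, (Wseq G δ (i+1)).card)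
          + 2 * δ * (Wseq G δ (J+1)).card := by ring
    omega

lemma chain_card : ∀ j : ℕ,
    Fintype.card V ≤ (Wseq G δ j).card + ∑ i ∈ Finset.range j, (pick G δ (Wseq G δ i)).card := by
  intro j
  induction j with
  | zero => simp [Wseq]
  | succ j ih =>
    rw [Finset.sum_range_succ]
    have h : (Wseq G δ j).card ≤ (Wseq G δ (j+1)).card + (pick G δ (Wseq G δ j)).card := by
      exact Finset.card_le_card_sdiff_add_card
    omega

/-- Core combinatorial theorem: peeling for `J = ⌈D/δ⌉` rounds yields a valid set `A`
with `(D+δ)|A| ≥ δ n`. -/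
theorem main_comb (D : ℕ) (hδ : 1 ≤ δ) (hδD : δ ≤ D)
    (hdense : E2 G Finset.univ ≤ D * Fintype.card V) :
    ∃ A : Finset V, (∀ v ∈ A, cnt G A v < δ) ∧
      δ * Fintype.card V ≤ (D + δ) * A.card := by
  classical
  set n := Fintype.card V with hn
  set J := (D + δ - 1) / δ with hJ
  have hδpos : 0 < δ := hδ
  have hJ1 : 1 ≤ J := by
    rw [hJ]
    apply Nat.le_div_iff_mul_le hδpos |>.mpr
    omega
  have hdm := Nat.div_add_mod (D + δ - 1) δ
  have hmlt : (D + δ - 1) % δ < δ := Nat.mod_lt _ hδpos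
  have hDJ : D ≤ δ * J := by rw [hJ]; omega
  have hJD : δ * J ≤ D + δ - 1 := by rw [hJ]; omega
  -- K := max card of picks over first J rounds
  obtain ⟨j₀, hj₀, hK⟩ := Finset.exists_mem_eq_sup (Finset.range J)
    ⟨0, Finset.mem_range.mpr hJ1⟩ (fun i => (pick G δ (Wseq G δ i)).card)
  set K := (Finset.range J).sup (fun i => (pick G δ (Wseq G δ i)).card) with hKdef
  refine ⟨pick G δ (Wseq G δ j₀), pick_valid G δ _, ?_⟩
  rw [← hK]
  -- per-round card bounds
  have hcardj : ∀ j ≤ J, n ≤ (Wseq G δ j).card + j * K := by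
    intro j hjJ
    have h := chain_card G δ j
    have hsum : ∑ i ∈ Finset.range j, (pick G δ (Wseq G δ i)).card ≤ j * K := by
      calc ∑ i ∈ Finset.range j, (pick G δ (Wseq G δ i)).card
          ≤ ∑ _i ∈ Finset.range j, K := by
            apply Finset.sum_le_sum
            intro i hi
            apply Finset.le_sup (f := fun i => (pick G δ (Wseq G δ i)).card)
            exact Finset.mem_range.mpr (lt_of_lt_of_le (Finset.mem_range.mp hi) hjJ)
        _ = j * K := by rw [Finset.sum_const, smul_eq_mul, Finset.card_range]
    omega
  -- sum over rounds 1..J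
  have hsumn : J * n ≤ (∑ i ∈ Finset.range J, (Wseq G δ (i+1)).card)
      + K * (∑ i ∈ Finset.range J, (i+1)) := by
    calc J * n = ∑ _i ∈ Finset.range J, n := by
            rw [Finset.sum_const, smul_eq_mul, Finset.card_range]
      _ ≤ ∑ i ∈ Finset.range J, ((Wseq G δ (i+1)).card + (i+1) * K) := by
          apply Finset.sum_le_sum
          intro i hi
          exact hcardj (i+1) (Nat.succ_le_of_lt (Finset.mem_range.mp hi))
      _ = (∑ i ∈ Finset.range J, (Wseq G δ (i+1)).card)
          + K * (∑ i ∈ Finset.range J, (i+1)) := by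
          rw [Finset.sum_add_distrib, Finset.mul_sum]
          congr 1
          apply Finset.sum_congr rfl
          intro i _
          ring
  -- Gauss
  have hgauss : 2 * (∑ i ∈ Finset.range J, (i+1)) = J * (J + 1) := by
    have h1 : ∑ i ∈ Finset.range J, (i+1) = (∑ i ∈ Finset.range J, i) + J := by
      rw [Finset.sum_add_distrib, Finset.sum_const, smul_eq_mul, mul_one, Finset.card_range]
    have h2 : (∑ i ∈ Finset.range (J+1), i) * 2 = (J+1) * J := by
      simpa using Finset.sum_range_id_mul_two (J + 1)
    have h3 : ∑ i ∈ Finset.range (J+1), i = (∑ i ∈ Finset.range J, i) + J :=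
      Finset.sum_range_succ _ J
    have h4 : (J + 1) * J = J * (J + 1) := Nat.mul_comm _ _
    omega
  -- density chain
  have hE2 : 2 * δ * (∑ i ∈ Finset.range J, (Wseq G δ (i+1)).card) ≤ D * n := by
    have h := chain_E2 G δ J
    have h0 : Wseq G δ 0 = Finset.univ := rfl
    rw [h0] at h
    omega
  -- combine: 2δJn ≤ Dn + δK·J(J+1)
  have hmain : 2 * δ * J * n ≤ D * n + δ * K * (J * (J + 1)) := by
    have h1 : 2 * δ * (J * n) ≤ 2 * δ * ((∑ i ∈ Finset.range J, (Wseq G δ (i+1)).card)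
        + K * (∑ i ∈ Finset.range J, (i+1))) :=
      Nat.mul_le_mul_left _ hsumn
    have h2 : 2 * δ * ((∑ i ∈ Finset.range J, (Wseq G δ (i+1)).card)
        + K * (∑ i ∈ Finset.range J, (i+1)))
        = 2 * δ * (∑ i ∈ Finset.range J, (Wseq G δ (i+1)).card)
          + δ * K * (2 * (∑ i ∈ Finset.range J, (i+1))) := by ring
    rw [h2, hgauss] at h1
    have h3 : 2 * δ * J * n = 2 * δ * (J * n) := by ring
    omega
  -- final nonlinear step in ℤ
  have hfinal : (δ : ℤ) * n ≤ ((D : ℤ) + δ) * K := by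
    have hm : (2 : ℤ) * δ * J * n ≤ D * n + δ * K * (J * (J + 1)) := by exact_mod_cast hmain
    have hb1 : (D : ℤ) ≤ δ * J := by exact_mod_cast hDJ
    have hb2 : (δ : ℤ) * J + 1 ≤ D + δ := by
      have h9 : δ * J + 1 ≤ D + δ := by omega
      exact_mod_cast h9
    set x : ℤ := (δ : ℤ) * J with hx
    have hx0 : (0:ℤ) ≤ x - D := sub_nonneg.mpr hb1
    have hx1 : (0:ℤ) ≤ (D + δ) - x := by linarith
    have hprod : (0:ℤ) ≤ (x - D) * ((D + δ) - x) := mul_nonneg hx0 hx1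
    have hkk : x * (x + δ) ≤ (2 * x - D) * ((D:ℤ) + δ) := by
      have e1 : (2 * x - D) * ((D:ℤ) + δ) - x * (x + δ) = (x - D) * ((D + δ) - x) := by ring
      linarith
    have hn0 : (0:ℤ) ≤ (n:ℤ) := Int.natCast_nonneg n
    have hDd0 : (0:ℤ) ≤ (D:ℤ) + δ := by positivity
    have hstep : x * (x + δ) * n ≤ ((D:ℤ) + δ) * (δ * K * (J * (J + 1))) := by
      calc x * (x + δ) * n ≤ (2 * x - D) * ((D:ℤ) + δ) * n :=
            mul_le_mul_of_nonneg_right hkk hn0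
        _ = ((D:ℤ) + δ) * (2 * δ * J * n - D * n) := by rw [hx]; ring
        _ ≤ ((D:ℤ) + δ) * (δ * K * (J * (J + 1))) := by
            apply mul_le_mul_of_nonneg_left _ hDd0
            linarith
    set c : ℤ := (δ:ℤ) * ((J:ℤ) * ((J:ℤ)+1)) with hc
    have hcpos : (0:ℤ) < c := by
      rw [hc]
      have hδ1 : (1:ℤ) ≤ (δ:ℤ) := by exact_mod_cast hδ
      have hJ1' : (1:ℤ) ≤ (J:ℤ) := by exact_mod_cast hJ1
      positivity
    have hre : x * (x + δ) * n = c * ((δ:ℤ) * n) := by rw [hx, hc]; ring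
    have hre2 : ((D:ℤ) + δ) * (δ * K * (J * (J + 1))) = c * (((D:ℤ) + δ) * K) := by
      rw [hc]; ring
    rw [hre, hre2] at hstep
    exact le_of_mul_le_mul_left hstep hcpos
  exact_mod_cast hfinal


lemma cnt_univ_eq_degree [DecidableRel G.Adj] (v : V) :
    cnt G Finset.univ v = G.degree v := by
  unfold cnt
  rw [Finset.filter_congr_decidable, ← SimpleGraph.neighborFinset_eq_filter]
  exact SimpleGraph.card_neighborFinset_eq_degree G v

lemma E2_univ [DecidableRel G.Adj] :
    E2 G Finset.univ = 2 * G.edgeFinset.card := by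
  unfold E2
  rw [← SimpleGraph.sum_degrees_eq_twice_card_edges]
  apply Finset.sum_congr rfl
  intro v _
  exact cnt_univ_eq_degree G v


end SDAux

/-- The simultaneous domination number of factors `F 0, …, F (k-1)` on a common
finite vertex set: the minimum cardinality of a set `S` that is a dominating set
in every factor. -/
noncomputable def simDomNum {V : Type*} [Fintype V] {k : ℕ}
    (F : Fin k → SimpleGraph V) : ℕ :=
  sInf {m | ∃ S : Finset V, (∀ i, ∀ v ∉ S, ∃ u ∈ S, (F i).Adj v u) ∧ S.card = m}

theorem stmt1 {V : Type*} [Fintype V] {k n δ : ℕ} (hk : 1 ≤ k) (hδ : 1 ≤ δ)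
    (hn : Fintype.card V = n) (F : Fin k → SimpleGraph V)
    (hmin : ∀ i, ∀ v : V, δ ≤ ((F i).neighborSet v).ncard)
    (dbar : ℝ) (hd : dbar = 2 * ((⨆ i, F i).edgeSet.ncard : ℝ) / n) :
    (simDomNum F : ℝ) ≤ ((⌈dbar⌉ : ℝ) / ((⌈dbar⌉ : ℝ) + δ)) * n := by
  classical
  set G : SimpleGraph V := ⨆ i, F i with hG
  rcases Nat.eq_zero_or_pos n with hn0 | hnpos
  · -- empty case
    have hne : IsEmpty V := by
      rw [← Fintype.card_eq_zero_iff, hn, hn0]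
    have h0 : simDomNum F = 0 := by
      apply Nat.le_zero.mp
      apply Nat.sInf_le
      exact ⟨∅, fun i v _ => (hne.false v).elim, Finset.card_empty⟩
    rw [h0, hn0]
    simp
  -- main case
  haveI : DecidableRel G.Adj := Classical.decRel _
  set M : ℕ := G.edgeFinset.card with hM
  -- min degree of G
  have hmindeg : ∀ v : V, δ ≤ SDAux.cnt G Finset.univ v := by
    intro v
    have i0 : Fin k := ⟨0, hk⟩
    have h1 : δ ≤ ((F i0).neighborSet v).ncard := hmin i0 v
    have h2 : (F i0).neighborSet v ⊆ G.neighborSet v := by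
      intro u hu
      exact SimpleGraph.iSup_adj.mpr ⟨i0, hu⟩
    have h3 : ((F i0).neighborSet v).ncard ≤ (G.neighborSet v).ncard :=
      Set.ncard_le_ncard h2 (Set.toFinite _)
    have h4 : (G.neighborSet v).ncard = SDAux.cnt G Finset.univ v := by
      rw [SDAux.cnt_univ_eq_degree, ← SimpleGraph.card_neighborFinset_eq_degree,
        SimpleGraph.neighborFinset_def]
      exact Set.ncard_eq_toFinset_card' _
    omega
  -- degree sum lower bound
  have hE2univ : SDAux.E2 G Finset.univ = 2 * M := SDAux.E2_univ G
  have hdegsum : δ * n ≤ 2 * M := by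
    have h1 : δ * n ≤ ∑ v : V, SDAux.cnt G Finset.univ v := by
      calc δ * n = ∑ _v : V, δ := by
            rw [Finset.sum_const, smul_eq_mul, Finset.card_univ, hn]; ring
        _ ≤ ∑ v : V, SDAux.cnt G Finset.univ v :=
            Finset.sum_le_sum (fun v _ => hmindeg v)
    have h2 : (∑ v : V, SDAux.cnt G Finset.univ v) = SDAux.E2 G Finset.univ := rfl
    omega
  -- edge count and dbar
  have hncard : (G.edgeSet.ncard : ℝ) = (M : ℝ) := by
    rw [hM, ← SimpleGraph.coe_edgeFinset, Set.ncard_coe_finset]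
  have hdbar : dbar = (2 * M : ℝ) / n := by
    rw [hd, hncard]
  have hnR : (0 : ℝ) < (n : ℝ) := by exact_mod_cast hnpos
  have hδdbar : (δ : ℝ) ≤ dbar := by
    rw [hdbar, le_div_iff₀ hnR]
    have : ((δ * n : ℕ) : ℝ) ≤ ((2 * M : ℕ) : ℝ) := by exact_mod_cast hdegsum
    push_cast at this
    linarith
  -- D as a natural number
  have hceilδ : (δ : ℤ) ≤ ⌈dbar⌉ := by
    have h1 : ((δ : ℤ) : ℝ) ≤ dbar := by push_cast; exact hδdbar
    calc (δ : ℤ) = ⌈((δ : ℤ) : ℝ)⌉ := by rw [Int.ceil_intCast]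
      _ ≤ ⌈dbar⌉ := Int.ceil_le_ceil h1
  set D : ℕ := (⌈dbar⌉).toNat with hD
  have hDcast : ((D : ℕ) : ℤ) = ⌈dbar⌉ := by
    rw [hD]
    exact Int.toNat_of_nonneg (le_trans (by exact_mod_cast Nat.zero_le δ) hceilδ)
  have hDR : ((D : ℕ) : ℝ) = (⌈dbar⌉ : ℝ) := by exact_mod_cast congrArg (Int.cast : ℤ → ℝ) hDcast
  have hδD : δ ≤ D := by
    have := hceilδ
    omega
  -- density: 2M ≤ D * n
  have h2M : 2 * M ≤ D * n := by
    have h1 : dbar ≤ (D : ℝ) := by rw [hDR]; exact Int.le_ceil dbar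
    rw [hdbar, div_le_iff₀ hnR] at h1
    have h2 : ((2 * M : ℕ) : ℝ) ≤ ((D * n : ℕ) : ℝ) := by push_cast; push_cast at h1; linarith
    exact_mod_cast h2
  -- apply the combinatorial theorem
  obtain ⟨A, hAvalid, hAcard⟩ := SDAux.main_comb G δ D hδ hδD (by rw [hE2univ, hn]; exact h2M)
  rw [hn] at hAcard
  -- the SD-set
  set S : Finset V := Finset.univ \ A with hS
  have hSdom : ∀ i, ∀ v ∉ S, ∃ u ∈ S, (F i).Adj v u := by
    intro i v hv
    have hvA : v ∈ A := by
      by_contra hvA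
      exact hv (Finset.mem_sdiff.mpr ⟨Finset.mem_univ v, hvA⟩)
    by_contra hcon
    push_neg at hcon
    -- all F i neighbors of v are in A
    have hsub : ((F i).neighborSet v).toFinset ⊆ A.filter (fun u => G.Adj v u) := by
      intro u hu
      rw [Set.mem_toFinset] at hu
      have hadj : G.Adj v u := SimpleGraph.iSup_adj.mpr ⟨i, hu⟩
      have huA : u ∈ A := by
        by_contra huA
        exact hcon u (Finset.mem_sdiff.mpr ⟨Finset.mem_univ u, huA⟩) hu
      exact Finset.mem_filter.mpr ⟨huA, hadj⟩
    have hcard1 : δ ≤ ((F i).neighborSet v).toFinset.card := by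
      have := hmin i v
      rwa [Set.ncard_eq_toFinset_card'] at this
    have hcard2 : ((F i).neighborSet v).toFinset.card ≤ SDAux.cnt G A v := by
      have h := Finset.card_le_card hsub
      unfold SDAux.cnt
      rw [Finset.filter_congr_decidable]
      exact h
    have := hAvalid v hvA
    omega
  have hScard : S.card = n - A.card := by
    rw [hS, Finset.card_sdiff_of_subset (Finset.subset_univ A), Finset.card_univ, hn]
  have hsdn : simDomNum F ≤ n - A.card := by
    rw [← hScard]
    exact Nat.sInf_le ⟨S, hSdom, rfl⟩
  -- final real arithmetic
  have hAn : A.card ≤ n := by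
    rw [← hn, ← Finset.card_univ]
    exact Finset.card_le_card (Finset.subset_univ A)
  have hDd : (0 : ℝ) < (D : ℝ) + δ := by
    have h1 : (1 : ℝ) ≤ (δ : ℝ) := by exact_mod_cast hδ
    have h2 : (0 : ℝ) ≤ (D : ℝ) := by positivity
    linarith
  rw [← hDR]
  rw [div_mul_eq_mul_div, le_div_iff₀ hDd]
  have hc1 : ((simDomNum F : ℕ) : ℝ) ≤ ((n - A.card : ℕ) : ℝ) := by exact_mod_cast hsdn
  have hc2 : ((n - A.card : ℕ) : ℝ) = (n : ℝ) - (A.card : ℝ) := by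
    push_cast [hAn]; ring
  have hc3 : ((δ * n : ℕ) : ℝ) ≤ (((D + δ) * A.card : ℕ) : ℝ) := by exact_mod_cast hAcard
  push_cast at hc3
  calc (simDomNum F : ℝ) * ((D : ℝ) + δ) ≤ ((n : ℝ) - A.card) * ((D : ℝ) + δ) := by
        apply mul_le_mul_of_nonneg_right _ (le_of_lt hDd)
        rw [← hc2]; exact hc1
    _ ≤ (D : ℝ) * n := by nlinarith [hc3]
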